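/- Let H = ℍ_{l₁} ⊕ ⋯ ⊕ ℍ_{l_k} with l_i | l_{i−1} for all i (orthogonal direct sum of hyperbolic groups). Then the subgroup Q(H) of Sp(H) generated by transvections acts transitively on the set of elements of H of maximal order l₁. -/

import Mathlib

/-- omega_n = e^{2 pi i/n} as a unit of the complex numbers. -/
noncomputable def omegaU (n : ℕ) : ℂˣ :=
  Units.mk0 (Complex.exp (2 * Real.pi * Complex.I / n)) (Complex.exp_ne_zero _)

/-- Z-bilinearity of a pairing into the unit group of the complex numbers. -/
def IsBilinPairing {H : Type*} [AddCommGroup H] (f : H → H → ℂˣ) : Prop :=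
  (∀ a b c : H, f (a + b) c = f a c * f b c) ∧ (∀ a b c : H, f a (b + c) = f a b * f a c)

/-- Antisymmetry: <a,b> = <b,a>⁻¹. -/
def IsAntisymmPairing {H : Type*} [AddCommGroup H] (f : H → H → ℂˣ) : Prop :=
  ∀ a b : H, f a b = (f b a)⁻¹

/-- Nonsingularity of a pairing: <a,b> = 1 for all b implies a = 0. -/
def IsNonsingularPairing {H : Type*} [AddCommGroup H] (f : H → H → ℂˣ) : Prop :=
  ∀ a : H, (∀ b : H, f a b = 1) → a = 0

/-- The standard pairing on the hyperbolic group H_n = Z/n × Z/n: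
<(i,j),(k,l)> = omega_n^{il - jk}. -/
noncomputable def hypPair (n : ℕ) (a b : ZMod n × ZMod n) : ℂˣ :=
  omegaU n ^ (a.1 * b.2 - a.2 * b.1).val

/-- The isometry group Sp(H) of a pairing, as a subgroup of the automorphism group. -/
def SpGroup {H : Type*} [AddCommGroup H] (f : H → H → ℂˣ) : AddSubgroup (AddAut H) where
  carrier := {e | ∀ a b : H, f (e a) (e b) = f a b}
  zero_mem' := fun _ _ => rfl
  add_mem' := by
    intro e g he hg a b
    have h1 : ∀ x, (e + g) x = e (g x) := fun x => rfl
    rw [h1, h1, he, hg]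
  neg_mem' := by
    intro e he a b
    have := he ((-e) a) ((-e) b)
    simpa using this.symm

/-- e is a transvection s_{b,k} for the pairing f: for some nonzero b and k ∈ ℤ,
e sends a to a - k·j(a)·b where <b,a> = ω_m^{j(a)} and m is the order of b. -/
def IsTransvection {H : Type*} [AddCommGroup H] (f : H → H → ℂˣ) (e : AddAut H) : Prop :=
  ∃ b : H, b ≠ 0 ∧ ∃ k : ℤ, ∀ a : H, ∃ j : ℤ,
    f b a = omegaU (addOrderOf b) ^ j ∧ e a = a - (k * j) • b

/-- e is a transvection s_b (with k = 1) for the pairing f. -/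
def IsTransvection1 {H : Type*} [AddCommGroup H] (f : H → H → ℂˣ) (e : AddAut H) : Prop :=
  ∃ b : H, b ≠ 0 ∧ ∀ a : H, ∃ j : ℤ,
    f b a = omegaU (addOrderOf b) ^ j ∧ e a = a - j • b

/-- The product pairing on the orthogonal direct sum of hyperbolic groups H_{l i}. -/
noncomputable def piPair {k : ℕ} (l : Fin k → ℕ)
    (a b : ∀ i : Fin k, ZMod (l i) × ZMod (l i)) : ℂˣ :=
  ∏ i : Fin k, hypPair (l i) (a i) (b i)

namespace Stmt13Aux


lemma orderOf_omegaU {n : ℕ} (hn : n ≠ 0) : orderOf (omegaU n) = n := by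
  rw [← orderOf_units]
  exact ((Complex.isPrimitiveRoot_exp n hn).eq_orderOf).symm

lemma omegaU_pow_eq_iff {n : ℕ} (hn : n ≠ 0) {A B : ℕ} :
    omegaU n ^ A = omegaU n ^ B ↔ (A : ZMod n) = B := by
  rw [pow_eq_pow_iff_modEq, orderOf_omegaU hn]
  exact (ZMod.natCast_eq_natCast_iff A B n).symm

lemma omegaU_pow_mod {n : ℕ} (hn : n ≠ 0) (m : ℕ) : omegaU n ^ m = omegaU n ^ (m % n) := by
  rw [omegaU_pow_eq_iff hn]
  exact (ZMod.natCast_eq_natCast_iff _ _ _).mpr (Nat.mod_modEq m n).symm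

lemma omegaU_dvd {m n : ℕ} (hm : m ≠ 0) (hn : n ≠ 0) (h : m ∣ n) :
    omegaU m = omegaU n ^ (n / m) := by
  have h1 : ((n / m : ℕ) : ℂ) = (n : ℂ) / m := by
    rw [Nat.cast_div h]
    exact_mod_cast hm
  apply Units.ext
  rw [Units.val_pow_eq_pow_val]
  show Complex.exp _ = Complex.exp _ ^ (n / m)
  rw [← Complex.exp_nat_mul]
  congr 1
  rw [h1]
  have hm' : (m : ℂ) ≠ 0 := by exact_mod_cast hm
  have hn' : (n : ℂ) ≠ 0 := by exact_mod_cast hn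
  field_simp

lemma val_intCast_zmod {n : ℕ} (hn : n ≠ 0) (A : ZMod n) : ((A.val : ℤ) : ZMod n) = A := by
  haveI := NeZero.mk hn
  push_cast [ZMod.natCast_zmod_val]
  rfl

lemma hypPair_eq_pow {m : ℕ} (a b : ZMod m × ZMod m) :
    hypPair m a b = omegaU m ^ (a.1 * b.2 - a.2 * b.1).val := rfl

lemma hypPair_add_right {m : ℕ} (hm : m ≠ 0) (a b c : ZMod m × ZMod m) :
    hypPair m a (b + c) = hypPair m a b * hypPair m a c := by
  haveI := NeZero.mk hm
  rw [hypPair_eq_pow, hypPair_eq_pow, hypPair_eq_pow, ← pow_add, omegaU_pow_eq_iff hm]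
  simp only [Nat.cast_add, ZMod.natCast_zmod_val, Prod.fst_add, Prod.snd_add]
  ring

lemma hypPair_add_left {m : ℕ} (hm : m ≠ 0) (a b c : ZMod m × ZMod m) :
    hypPair m (a + b) c = hypPair m a c * hypPair m b c := by
  haveI := NeZero.mk hm
  rw [hypPair_eq_pow, hypPair_eq_pow, hypPair_eq_pow, ← pow_add, omegaU_pow_eq_iff hm]
  simp only [Nat.cast_add, ZMod.natCast_zmod_val, Prod.fst_add, Prod.snd_add]
  ring

lemma hypPair_mul_antisymm {m : ℕ} (hm : m ≠ 0) (a b : ZMod m × ZMod m) :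
    hypPair m a b * hypPair m b a = 1 := by
  haveI := NeZero.mk hm
  rw [hypPair_eq_pow, hypPair_eq_pow, ← pow_add]
  have : omegaU m ^ ((a.1 * b.2 - a.2 * b.1).val + (b.1 * a.2 - b.2 * a.1).val)
      = omegaU m ^ (0 : ℕ) := by
    rw [omegaU_pow_eq_iff hm]
    simp only [Nat.cast_add, ZMod.natCast_zmod_val, Nat.cast_zero]
    ring
  rw [this, pow_zero]

lemma hypPair_self {m : ℕ} (hm : m ≠ 0) (a : ZMod m × ZMod m) :
    hypPair m a a = 1 := by
  haveI := NeZero.mk hm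
  rw [hypPair_eq_pow]
  have : a.1 * a.2 - a.2 * a.1 = 0 := by ring
  rw [this, ZMod.val_zero, pow_zero]

lemma hypPair_zero_right {m : ℕ} (hm : m ≠ 0) (a : ZMod m × ZMod m) :
    hypPair m a 0 = 1 := by
  haveI := NeZero.mk hm
  rw [hypPair_eq_pow]
  simp [ZMod.val_zero]

lemma hypPair_nondeg {m : ℕ} (hm : m ≠ 0) {a : ZMod m × ZMod m}
    (h : ∀ y, hypPair m a y = 1) : a = 0 := by
  haveI := NeZero.mk hm
  have e1 : omegaU m ^ ((a.1 * (0, 1).2 - a.2 * (0, 1).1).val) = omegaU m ^ (0 : ℕ) := by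
    rw [pow_zero]; exact h (0, 1)
  have e2 : omegaU m ^ ((a.1 * (-1, 0).2 - a.2 * (-1, 0).1).val) = omegaU m ^ (0 : ℕ) := by
    rw [pow_zero]; exact h (-1, 0)
  rw [omegaU_pow_eq_iff hm] at e1 e2
  simp only [ZMod.natCast_zmod_val, Nat.cast_zero] at e1 e2
  simp only [mul_one, mul_zero, sub_zero, zero_sub, mul_neg_one, neg_neg, zero_mul] at e1 e2
  exact Prod.ext e1 (by simpa using e2)

section PiLemmas

variable {k : ℕ} {l : Fin k → ℕ} {n : ℕ}

lemma piPair_add_right (h0 : ∀ i, 0 < l i) (x y z : ∀ i : Fin k, ZMod (l i) × ZMod (l i)) :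
    piPair l x (y + z) = piPair l x y * piPair l x z := by
  rw [piPair, piPair, piPair, ← Finset.prod_mul_distrib]
  exact Finset.prod_congr rfl fun i _ => by
    rw [Pi.add_apply]; exact hypPair_add_right (h0 i).ne' _ _ _

lemma piPair_add_left (h0 : ∀ i, 0 < l i) (x y z : ∀ i : Fin k, ZMod (l i) × ZMod (l i)) :
    piPair l (x + y) z = piPair l x z * piPair l y z := by
  rw [piPair, piPair, piPair, ← Finset.prod_mul_distrib]
  exact Finset.prod_congr rfl fun i _ => by
    rw [Pi.add_apply]; exact hypPair_add_left (h0 i).ne' _ _ _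

lemma piPair_mul_antisymm (h0 : ∀ i, 0 < l i) (x y : ∀ i : Fin k, ZMod (l i) × ZMod (l i)) :
    piPair l x y * piPair l y x = 1 := by
  rw [piPair, piPair, ← Finset.prod_mul_distrib]
  rw [Finset.prod_eq_one]
  intro i _
  exact hypPair_mul_antisymm (h0 i).ne' _ _

lemma piPair_self (h0 : ∀ i, 0 < l i) (x : ∀ i : Fin k, ZMod (l i) × ZMod (l i)) :
    piPair l x x = 1 := by
  rw [piPair, Finset.prod_eq_one]
  intro i _
  exact hypPair_self (h0 i).ne' _

lemma piPair_zero_right (h0 : ∀ i, 0 < l i) (x : ∀ i : Fin k, ZMod (l i) × ZMod (l i)) :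
    piPair l x 0 = 1 := by
  rw [piPair, Finset.prod_eq_one]
  intro i _
  exact hypPair_zero_right (h0 i).ne' _

lemma piPair_exists (hl : ∀ i, l i ∣ n) (h0 : ∀ i, 0 < l i) (hn : n ≠ 0)
    (x y : ∀ i : Fin k, ZMod (l i) × ZMod (l i)) :
    ∃ e : ZMod n, piPair l x y = omegaU n ^ e.val := by
  refine ⟨((∑ i, (n / l i) * ((x i).1 * (y i).2 - (x i).2 * (y i).1).val : ℕ) : ZMod n), ?_⟩
  rw [piPair, ZMod.val_natCast, ← omegaU_pow_mod hn, ← Finset.prod_pow_eq_pow_sum]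
  apply Finset.prod_congr rfl
  intro i _
  rw [hypPair_eq_pow, omegaU_dvd (h0 i).ne' hn (hl i), ← pow_mul]

variable (hl : ∀ i, l i ∣ n) (h0 : ∀ i, 0 < l i) (hn : n ≠ 0)

noncomputable def Epair (x y : ∀ i : Fin k, ZMod (l i) × ZMod (l i)) : ZMod n :=
  (piPair_exists hl h0 hn x y).choose

lemma Epair_spec (x y : ∀ i : Fin k, ZMod (l i) × ZMod (l i)) :
    piPair l x y = omegaU n ^ (Epair hl h0 hn x y).val :=
  (piPair_exists hl h0 hn x y).choose_spec

lemma Epair_eq {x y : ∀ i : Fin k, ZMod (l i) × ZMod (l i)} {N : ℕ}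
    (h : piPair l x y = omegaU n ^ N) : Epair hl h0 hn x y = (N : ZMod n) := by
  haveI := NeZero.mk hn
  have hs := Epair_spec hl h0 hn x y
  rw [hs] at h
  have h2 := (omegaU_pow_eq_iff hn).mp h
  rwa [ZMod.natCast_zmod_val] at h2

lemma Epair_add_right (x y z : ∀ i : Fin k, ZMod (l i) × ZMod (l i)) :
    Epair hl h0 hn x (y + z) = Epair hl h0 hn x y + Epair hl h0 hn x z := by
  haveI := NeZero.mk hn
  have h : piPair l x (y + z)
      = omegaU n ^ ((Epair hl h0 hn x y).val + (Epair hl h0 hn x z).val) := by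
    rw [piPair_add_right h0, Epair_spec hl h0 hn x y, Epair_spec hl h0 hn x z, pow_add]
  have := Epair_eq hl h0 hn h
  rwa [Nat.cast_add, ZMod.natCast_zmod_val, ZMod.natCast_zmod_val] at this

lemma Epair_add_left (x y z : ∀ i : Fin k, ZMod (l i) × ZMod (l i)) :
    Epair hl h0 hn (x + y) z = Epair hl h0 hn x z + Epair hl h0 hn y z := by
  haveI := NeZero.mk hn
  have h : piPair l (x + y) z
      = omegaU n ^ ((Epair hl h0 hn x z).val + (Epair hl h0 hn y z).val) := by
    rw [piPair_add_left h0, Epair_spec hl h0 hn x z, Epair_spec hl h0 hn y z, pow_add]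
  have := Epair_eq hl h0 hn h
  rwa [Nat.cast_add, ZMod.natCast_zmod_val, ZMod.natCast_zmod_val] at this

lemma Epair_self (x : ∀ i : Fin k, ZMod (l i) × ZMod (l i)) :
    Epair hl h0 hn x x = 0 := by
  have h : piPair l x x = omegaU n ^ (0 : ℕ) := by
    rw [pow_zero]; exact piPair_self h0 x
  simpa using Epair_eq hl h0 hn h

lemma Epair_zero_right (x : ∀ i : Fin k, ZMod (l i) × ZMod (l i)) :
    Epair hl h0 hn x 0 = 0 := by
  have h : piPair l x 0 = omegaU n ^ (0 : ℕ) := by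
    rw [pow_zero]; exact piPair_zero_right h0 x
  simpa using Epair_eq hl h0 hn h

lemma Epair_add_antisymm (x y : ∀ i : Fin k, ZMod (l i) × ZMod (l i)) :
    Epair hl h0 hn x y + Epair hl h0 hn y x = 0 := by
  haveI := NeZero.mk hn
  have h1 : omegaU n ^ ((Epair hl h0 hn x y).val + (Epair hl h0 hn y x).val)
      = omegaU n ^ (0 : ℕ) := by
    rw [pow_add, ← Epair_spec hl h0 hn x y, ← Epair_spec hl h0 hn y x,
      piPair_mul_antisymm h0, pow_zero]
  have := (omegaU_pow_eq_iff hn).mp h1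
  simpa [ZMod.natCast_zmod_val] using this

noncomputable def EhomR (x : ∀ i : Fin k, ZMod (l i) × ZMod (l i)) :
    (∀ i : Fin k, ZMod (l i) × ZMod (l i)) →+ ZMod n :=
  AddMonoidHom.mk' (fun y => Epair hl h0 hn x y) (Epair_add_right hl h0 hn x)

noncomputable def EhomL (y : ∀ i : Fin k, ZMod (l i) × ZMod (l i)) :
    (∀ i : Fin k, ZMod (l i) × ZMod (l i)) →+ ZMod n :=
  AddMonoidHom.mk' (fun x => Epair hl h0 hn x y) (fun a b => Epair_add_left hl h0 hn a b y)

lemma Epair_nsmul_right (x y : ∀ i : Fin k, ZMod (l i) × ZMod (l i)) (m : ℕ) :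
    Epair hl h0 hn x (m • y) = m • Epair hl h0 hn x y :=
  (EhomR hl h0 hn x).map_nsmul m y

lemma Epair_zsmul_right (x y : ∀ i : Fin k, ZMod (l i) × ZMod (l i)) (z : ℤ) :
    Epair hl h0 hn x (z • y) = z • Epair hl h0 hn x y :=
  (EhomR hl h0 hn x).map_zsmul z y

lemma Epair_nsmul_left (x y : ∀ i : Fin k, ZMod (l i) × ZMod (l i)) (m : ℕ) :
    Epair hl h0 hn (m • x) y = m • Epair hl h0 hn x y :=
  (EhomL hl h0 hn y).map_nsmul m x

lemma Epair_zsmul_left (x y : ∀ i : Fin k, ZMod (l i) × ZMod (l i)) (z : ℤ) :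
    Epair hl h0 hn (z • x) y = z • Epair hl h0 hn x y :=
  (EhomL hl h0 hn y).map_zsmul z x

lemma Epair_zero_left (x : ∀ i : Fin k, ZMod (l i) × ZMod (l i)) :
    Epair hl h0 hn 0 x = 0 :=
  (EhomL hl h0 hn x).map_zero

include h0 in
lemma piPair_nondeg : ∀ a : ∀ i : Fin k, ZMod (l i) × ZMod (l i),
    (∀ x, piPair l a x = 1) → a = 0 := by
  intro a ha
  funext i
  have hcomp : ∀ y, hypPair (l i) (a i) y = 1 := by
    intro y
    have hprod : piPair l a (Pi.single i y) = hypPair (l i) (a i) y := by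
      rw [piPair]
      rw [Finset.prod_eq_single_of_mem i (Finset.mem_univ i)
        (fun j _ hji => by rw [Pi.single_eq_of_ne hji]; exact hypPair_zero_right (h0 j).ne' _)]
      rw [Pi.single_eq_same]
    rw [← hprod]
    exact ha _
  show a i = 0
  exact hypPair_nondeg (h0 i).ne' hcomp

include hl in
lemma nsmul_n_eq_zero (x : ∀ i : Fin k, ZMod (l i) × ZMod (l i)) : n • x = 0 := by
  funext i
  have hcast : ((n : ℕ) : ZMod (l i)) = 0 := (ZMod.natCast_eq_zero_iff n (l i)).mpr (hl i)
  have hz : ∀ w : ZMod (l i), n • w = 0 := fun w => by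
    rw [nsmul_eq_mul, hcast, zero_mul]
  show n • x i = 0
  exact Prod.ext (hz _) (hz _)

include hl in
lemma zsmul_congr (x : ∀ i : Fin k, ZMod (l i) × ZMod (l i)) {z₁ z₂ : ℤ}
    (h : (z₁ : ZMod n) = z₂) : z₁ • x = z₂ • x := by
  have hd : (n : ℤ) ∣ z₁ - z₂ := by
    rwa [← ZMod.intCast_zmod_eq_zero_iff_dvd, Int.cast_sub, sub_eq_zero]
  obtain ⟨q, hq⟩ := hd
  have hz : z₁ = z₂ + n * q := by linarith
  rw [hz, add_zsmul, mul_zsmul, natCast_zsmul, nsmul_n_eq_zero hl, add_zero]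

end PiLemmas

section Unit

variable {k : ℕ} {l : Fin k → ℕ} {n : ℕ}
variable (hl : ∀ i, l i ∣ n) (h0 : ∀ i, 0 < l i) (hn : n ≠ 0)

include hl h0 hn in
lemma exists_unit_pair (a : ∀ i : Fin k, ZMod (l i) × ZMod (l i))
    (ha : addOrderOf a = n) : ∃ c, IsUnit (Epair hl h0 hn a c) := by
  haveI := NeZero.mk hn
  haveI : IsPrincipalIdealRing (ZMod n) :=
    IsPrincipalIdealRing.of_surjective (Int.castRingHom (ZMod n)) ZMod.intCast_surjective
  let I : Ideal (ZMod n) :=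
    { carrier := Set.range (fun c => Epair hl h0 hn a c)
      add_mem' := by
        rintro _ _ ⟨x, rfl⟩ ⟨y, rfl⟩
        exact ⟨x + y, by simp only []; rw [Epair_add_right hl h0 hn]⟩
      zero_mem' := ⟨0, Epair_zero_right hl h0 hn a⟩
      smul_mem' := by
        rintro r _ ⟨x, rfl⟩
        refine ⟨r.val • x, ?_⟩
        show Epair hl h0 hn a (ZMod.val r • x) = r • Epair hl h0 hn a x
        rw [Epair_nsmul_right hl h0 hn, smul_eq_mul, nsmul_eq_mul, ZMod.natCast_zmod_val] }
  obtain ⟨g, hg⟩ := (IsPrincipalIdealRing.principal I).principal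
  have hgI : g ∈ I := by rw [hg]; exact Ideal.mem_span_singleton_self g
  obtain ⟨c₀, hc₀⟩ : ∃ c, Epair hl h0 hn a c = g := hgI
  by_cases hu : IsUnit g
  · exact ⟨c₀, hc₀ ▸ hu⟩
  · exfalso
    have hco : ¬ Nat.Coprime (ZMod.val g) n := by
      intro h
      apply hu
      have h2 := (ZMod.isUnit_iff_coprime (ZMod.val g) n).mpr h
      rwa [ZMod.natCast_zmod_val] at h2
    obtain ⟨p, hp, hpd⟩ := Nat.exists_prime_and_dvd hco
    have hpn : p ∣ n := hpd.trans (Nat.gcd_dvd_right _ _)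
    have hpg : p ∣ ZMod.val g := hpd.trans (Nat.gcd_dvd_left _ _)
    set m := n / p with hm
    have hmn : m < n := Nat.div_lt_self (Nat.pos_of_ne_zero hn) hp.one_lt
    have hma : m • a = 0 := by
      apply piPair_nondeg h0
      intro x
      have h1 : Epair hl h0 hn (m • a) x = 0 := by
        rw [Epair_nsmul_left hl h0 hn]
        have hmem : Epair hl h0 hn a x ∈ I := ⟨x, rfl⟩
        rw [hg] at hmem
        obtain ⟨r, hr⟩ := Ideal.mem_span_singleton'.mp hmem
        have hmg : (m : ZMod n) * g = 0 := by
          rw [← ZMod.natCast_zmod_val g, ← Nat.cast_mul, ZMod.natCast_eq_zero_iff]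
          obtain ⟨t, ht⟩ := hpg
          rw [ht, ← mul_assoc, Nat.div_mul_cancel hpn]
          exact Dvd.intro t rfl
        rw [← hr, nsmul_eq_mul]
        calc (m : ZMod n) * (r * g) = r * ((m : ZMod n) * g) := by ring
        _ = 0 := by rw [hmg, mul_zero]
      rw [Epair_spec hl h0 hn (m • a) x, h1, ZMod.val_zero, pow_zero]
    have hdvd2 : addOrderOf a ∣ m := addOrderOf_dvd_of_nsmul_eq_zero hma
    rw [ha] at hdvd2
    have hm0 : 0 < m := Nat.div_pos (Nat.le_of_dvd (Nat.pos_of_ne_zero hn) hpn) hp.pos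
    exact absurd (Nat.le_of_dvd hm0 hdvd2) (not_le.mpr hmn)

end Unit

section CRT

lemma exists_unit_add {n : ℕ} (hn : n ≠ 0) (a b : ZMod n) (h : IsCoprime a b) :
    ∃ z : ℕ, IsUnit (a + (z : ZMod n) * b) := by
  haveI := NeZero.mk hn
  obtain ⟨u, v, huv⟩ := h
  have hmod : (u.val * a.val + v.val * b.val) ≡ 1 [MOD n] := by
    have hcast : ((u.val * a.val + v.val * b.val : ℕ) : ZMod n) = ((1 : ℕ) : ZMod n) := by
      push_cast [ZMod.natCast_zmod_val]
      exact huv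
    exact (ZMod.natCast_eq_natCast_iff _ _ _).mp hcast
  have hd1 : Nat.gcd (Nat.gcd a.val b.val) n = 1 := by
    set d := Nat.gcd (Nat.gcd a.val b.val) n with hd
    have hda : d ∣ a.val := (Nat.gcd_dvd_left _ _).trans (Nat.gcd_dvd_left _ _)
    have hdb : d ∣ b.val := (Nat.gcd_dvd_left _ _).trans (Nat.gcd_dvd_right _ _)
    have hdn : d ∣ n := Nat.gcd_dvd_right _ _
    have hX : d ∣ u.val * a.val + v.val * b.val := dvd_add (hda.mul_left _) (hdb.mul_left _)
    have h2 : (u.val * a.val + v.val * b.val) ≡ 1 [MOD d] := hmod.of_dvd hdn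
    have h3 : (u.val * a.val + v.val * b.val) ≡ 0 [MOD d] := Nat.modEq_zero_iff_dvd.mpr hX
    have h4 : (1 : ℕ) ≡ 0 [MOD d] := h2.symm.trans h3
    exact Nat.dvd_one.mp (Nat.modEq_zero_iff_dvd.mp h4)
  set z := ∏ p ∈ n.primeFactors.filter (fun p => ¬ p ∣ a.val), p with hz
  refine ⟨z, ?_⟩
  have hcop : Nat.Coprime (a.val + z * b.val) n := by
    by_contra hcon
    obtain ⟨p, hp, hpd⟩ := Nat.exists_prime_and_dvd hcon
    have hpx : p ∣ a.val + z * b.val := hpd.trans (Nat.gcd_dvd_left _ _)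
    have hpn : p ∣ n := hpd.trans (Nat.gcd_dvd_right _ _)
    by_cases hpa : p ∣ a.val
    · have hpb : ¬ p ∣ b.val := by
        intro hpb
        have : p ∣ Nat.gcd (Nat.gcd a.val b.val) n := Nat.dvd_gcd (Nat.dvd_gcd hpa hpb) hpn
        rw [hd1] at this
        exact hp.ne_one (Nat.dvd_one.mp this)
      have hpz : ¬ p ∣ z := by
        intro hpz
        obtain ⟨q, hq, hpq⟩ := hp.prime.exists_mem_finset_dvd hpz
        have hq' := Finset.mem_filter.mp hq
        have hqprime : q.Prime := Nat.prime_of_mem_primeFactors hq'.1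
        have : p = q := (Nat.prime_dvd_prime_iff_eq hp hqprime).mp hpq
        exact hq'.2 (this ▸ hpa)
      have hsum : p ∣ z * b.val := (Nat.dvd_add_right hpa).mp hpx
      rcases (Nat.Prime.dvd_mul hp).mp hsum with h | h
      · exact hpz h
      · exact hpb h
    · have hpz : p ∣ z := by
        apply Finset.dvd_prod_of_mem
        rw [Finset.mem_filter, Nat.mem_primeFactors]
        exact ⟨⟨hp, hpn, hn⟩, hpa⟩
      have h2 : p ∣ z * b.val := hpz.mul_right _
      have h3 := Nat.dvd_sub hpx h2
      rw [Nat.add_sub_cancel] at h3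
      exact hpa h3
  have := (ZMod.isUnit_iff_coprime (a.val + z * b.val) n).mpr hcop
  have hcast : ((a.val + z * b.val : ℕ) : ZMod n) = a + (z : ZMod n) * b := by
    push_cast [ZMod.natCast_zmod_val]
    ring
  rwa [hcast] at this

lemma exists_unit_lin {n : ℕ} (hn : n ≠ 0) (s s' t t' : ZMod n)
    (hs : IsUnit s) (ht' : IsUnit t') :
    ∃ u v : ZMod n, IsUnit (s * u + s' * v) ∧ IsUnit (t * u + t' * v) := by
  have hco : IsCoprime t (s * t' - s' * t) := by
    obtain ⟨si, hsi⟩ := hs.exists_left_inv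
    obtain ⟨ti, hti⟩ := ht'.exists_left_inv
    refine ⟨si * ti * s', si * ti, ?_⟩
    have : si * ti * s' * t + si * ti * (s * t' - s' * t) = (si * s) * (ti * t') := by ring
    rw [this, hsi, hti, mul_one]
  obtain ⟨z, hz⟩ := exists_unit_add hn t (s * t' - s' * t) hco
  refine ⟨1 - s' * z, s * z, ?_, ?_⟩
  · have h1 : s * (1 - s' * z) + s' * (s * z) = s := by ring
    rw [h1]; exact hs
  · have h2 : t * (1 - s' * z) + t' * (s * z) = t + (z : ZMod n) * (s * t' - s' * t) := by ring
    rw [h2]; exact hz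

end CRT

section Final

variable {k : ℕ} {l : Fin k → ℕ} {n : ℕ}
variable (hl : ∀ i, l i ∣ n) (h0 : ∀ i, 0 < l i) (hn : n ≠ 0)

include hl h0 hn in
lemma exists_good_c (a b : ∀ i : Fin k, ZMod (l i) × ZMod (l i))
    (ha : addOrderOf a = n) (hb : addOrderOf b = n) :
    ∃ c, IsUnit (Epair hl h0 hn c a) ∧ IsUnit (Epair hl h0 hn c b) := by
  haveI := NeZero.mk hn
  obtain ⟨c₁, h1⟩ := exists_unit_pair hl h0 hn a ha
  obtain ⟨c₂, h2⟩ := exists_unit_pair hl h0 hn b hb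
  have anti : ∀ x y, Epair hl h0 hn y x = - Epair hl h0 hn x y := fun x y =>
    eq_neg_of_add_eq_zero_left (by rw [add_comm]; exact Epair_add_antisymm hl h0 hn x y)
  have hs : IsUnit (Epair hl h0 hn c₁ a) := by rw [anti a c₁]; exact h1.neg
  have ht' : IsUnit (Epair hl h0 hn c₂ b) := by rw [anti b c₂]; exact h2.neg
  obtain ⟨u, v, hU1, hU2⟩ := exists_unit_lin hn (Epair hl h0 hn c₁ a) (Epair hl h0 hn c₂ a)
    (Epair hl h0 hn c₁ b) (Epair hl h0 hn c₂ b) hs ht'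
  refine ⟨u.val • c₁ + v.val • c₂, ?_, ?_⟩
  · have he : Epair hl h0 hn (u.val • c₁ + v.val • c₂) a
        = Epair hl h0 hn c₁ a * u + Epair hl h0 hn c₂ a * v := by
      rw [Epair_add_left hl h0 hn, Epair_nsmul_left hl h0 hn, Epair_nsmul_left hl h0 hn,
        nsmul_eq_mul, nsmul_eq_mul, ZMod.natCast_zmod_val, ZMod.natCast_zmod_val]
      ring
    rw [he]; exact hU1
  · have he : Epair hl h0 hn (u.val • c₁ + v.val • c₂) b
        = Epair hl h0 hn c₁ b * u + Epair hl h0 hn c₂ b * v := by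
      rw [Epair_add_left hl h0 hn, Epair_nsmul_left hl h0 hn, Epair_nsmul_left hl h0 hn,
        nsmul_eq_mul, nsmul_eq_mul, ZMod.natCast_zmod_val, ZMod.natCast_zmod_val]
      ring
    rw [he]; exact hU2

noncomputable def transAut (d : ∀ i : Fin k, ZMod (l i) × ZMod (l i)) (kk : ℤ) :
    AddAut (∀ i : Fin k, ZMod (l i) × ZMod (l i)) where
  toFun := fun x => x - (kk * ((Epair hl h0 hn d x).val : ℤ)) • d
  invFun := fun x => x + (kk * ((Epair hl h0 hn d x).val : ℤ)) • d
  left_inv := by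
    intro x
    have hE : Epair hl h0 hn d (x - (kk * ((Epair hl h0 hn d x).val : ℤ)) • d)
        = Epair hl h0 hn d x := by
      rw [sub_eq_add_neg, ← neg_smul, Epair_add_right hl h0 hn, Epair_zsmul_right hl h0 hn,
        Epair_self hl h0 hn, smul_zero, add_zero]
    show (x - (kk * ((Epair hl h0 hn d x).val : ℤ)) • d)
        + (kk * ((Epair hl h0 hn d
            (x - (kk * ((Epair hl h0 hn d x).val : ℤ)) • d)).val : ℤ)) • d = x
    rw [hE]
    abel
  right_inv := by
    intro x
    have hE : Epair hl h0 hn d (x + (kk * ((Epair hl h0 hn d x).val : ℤ)) • d)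
        = Epair hl h0 hn d x := by
      rw [Epair_add_right hl h0 hn, Epair_zsmul_right hl h0 hn,
        Epair_self hl h0 hn, smul_zero, add_zero]
    show (x + (kk * ((Epair hl h0 hn d x).val : ℤ)) • d)
        - (kk * ((Epair hl h0 hn d
            (x + (kk * ((Epair hl h0 hn d x).val : ℤ)) • d)).val : ℤ)) • d = x
    rw [hE]
    abel
  map_add' := by
    intro x y
    show x + y - (kk * ((Epair hl h0 hn d (x + y)).val : ℤ)) • d
        = (x - (kk * ((Epair hl h0 hn d x).val : ℤ)) • d)
          + (y - (kk * ((Epair hl h0 hn d y).val : ℤ)) • d)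
    have h1 : (kk * ((Epair hl h0 hn d (x + y)).val : ℤ)) • d
        = (kk * ((Epair hl h0 hn d x).val : ℤ) + kk * ((Epair hl h0 hn d y).val : ℤ)) • d := by
      apply zsmul_congr hl
      push_cast [val_intCast_zmod hn]
      rw [Epair_add_right hl h0 hn]
      ring
    rw [h1, add_zsmul]
    abel

include hl h0 hn in
lemma one_step (hn1 : n ≠ 1) (a c : ∀ i : Fin k, ZMod (l i) × ZMod (l i))
    (hu : IsUnit (Epair hl h0 hn c a)) :
    ∃ e ∈ AddSubgroup.closure
        {e : AddAut (∀ i : Fin k, ZMod (l i) × ZMod (l i)) | IsTransvection (piPair l) e},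
      e a = c := by
  haveI := NeZero.mk hn
  set d := c - a with hdd
  have hEd : Epair hl h0 hn d a = Epair hl h0 hn c a := by
    rw [hdd, sub_eq_add_neg, Epair_add_left hl h0 hn,
      show -a = (-1 : ℤ) • a by simp, Epair_zsmul_left hl h0 hn, Epair_self hl h0 hn,
      smul_zero, add_zero]
  have hud : IsUnit (Epair hl h0 hn d a) := hEd ▸ hu
  have hd0 : d ≠ 0 := by
    intro h
    rw [h, Epair_zero_left hl h0 hn] at hud
    have h1 : ((1 : ℕ) : ZMod n) = ((0 : ℕ) : ZMod n) := by
      simpa using (isUnit_zero_iff.mp hud).symm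
    have h2 := (ZMod.natCast_eq_natCast_iff _ _ _).mp h1
    exact hn1 (Nat.dvd_one.mp (Nat.modEq_zero_iff_dvd.mp h2))
  have hordd : addOrderOf d = n := by
    have h1 : addOrderOf d ∣ n := addOrderOf_dvd_of_nsmul_eq_zero (nsmul_n_eq_zero hl d)
    have h3 : (addOrderOf d : ZMod n) * Epair hl h0 hn d a = 0 := by
      rw [← nsmul_eq_mul, ← Epair_nsmul_left hl h0 hn, addOrderOf_nsmul_eq_zero,
        Epair_zero_left hl h0 hn]
    have h4 : (addOrderOf d : ZMod n) = 0 :=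
      hud.mul_right_cancel (by rw [h3, zero_mul])
    exact Nat.dvd_antisymm h1 ((ZMod.natCast_eq_zero_iff _ _).mp h4)
  set u := hud.unit with hu_def
  set kk : ℤ := -((((u⁻¹ : (ZMod n)ˣ) : ZMod n)).val : ℤ) with hkk
  refine ⟨transAut hl h0 hn d kk, ?_, ?_⟩
  · apply AddSubgroup.subset_closure
    refine ⟨d, hd0, kk, fun x => ⟨((Epair hl h0 hn d x).val : ℤ), ?_, rfl⟩⟩
    rw [hordd, zpow_natCast]
    exact Epair_spec hl h0 hn d x
  · show a - (kk * ((Epair hl h0 hn d a).val : ℤ)) • d = c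
    have hsm : (kk * ((Epair hl h0 hn d a).val : ℤ)) • d = (-1 : ℤ) • d := by
      apply zsmul_congr hl
      have hval : ((u : ZMod n)) = Epair hl h0 hn d a := hud.unit_spec
      rw [hkk]
      push_cast [val_intCast_zmod hn]
      rw [← hval, neg_mul, u.inv_mul]
    rw [hsm, neg_one_zsmul, sub_neg_eq_add, hdd]
    abel

end Final

end Stmt13Aux

open Stmt13Aux

/-- For H = H_{l₁} ⊕ ⋯ ⊕ H_{l_k} with l_i ∣ l_{i-1}, the subgroup Q(H) generated by the
transvections acts transitively on the elements of maximal order l₁. -/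
theorem stmt13 (k : ℕ) (hk : 0 < k) (l : Fin k → ℕ) (hpos : ∀ i, 0 < l i)
    (hdvd : ∀ i j : Fin k, i ≤ j → l j ∣ l i) :
    ∀ a b : ∀ i : Fin k, ZMod (l i) × ZMod (l i),
      addOrderOf a = l ⟨0, hk⟩ → addOrderOf b = l ⟨0, hk⟩ →
      ∃ e ∈ AddSubgroup.closure
          {e : AddAut (∀ i : Fin k, ZMod (l i) × ZMod (l i)) | IsTransvection (piPair l) e},
        e a = b := by
  intro a b ha hb
  have hn : l ⟨0, hk⟩ ≠ 0 := (hpos _).ne'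
  have hl : ∀ i, l i ∣ l ⟨0, hk⟩ := fun i => hdvd ⟨0, hk⟩ i (by simp [Fin.le_def])
  by_cases hab : a = b
  · exact ⟨0, AddSubgroup.zero_mem _, by simp [hab]⟩
  · have hn1 : l ⟨0, hk⟩ ≠ 1 := by
      intro h1
      apply hab
      have ha0 : a = 0 := AddMonoid.addOrderOf_eq_one_iff.mp (by rw [ha, h1])
      have hb0 : b = 0 := AddMonoid.addOrderOf_eq_one_iff.mp (by rw [hb, h1])
      rw [ha0, hb0]
    obtain ⟨c, hca, hcb⟩ := exists_good_c hl hpos hn a b ha hb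
    obtain ⟨e₁, he₁m, he₁⟩ := one_step hl hpos hn hn1 a c hca
    obtain ⟨e₂, he₂m, he₂⟩ := one_step hl hpos hn hn1 b c hcb
    refine ⟨-e₂ + e₁, AddSubgroup.add_mem _ (AddSubgroup.neg_mem _ he₂m) he₁m, ?_⟩
    have hmul : (-e₂ + e₁) a = (-e₂) (e₁ a) := rfl
    rw [hmul, he₁, ← he₂]
    simp
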